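/- arXiv:2407.12448 — 8 statements merged into one kernel-verified Lean document; each statement's English description precedes it below -/
import Mathlib

section
/- Let X be a type, μ, ν : X → ℝ nonnegative functions, and let N, n, C be strictly positive real numbers with ν(x) ≤ C · μ(x) for all x. Define the mixture ρ(x) := (N·μ(x) + n·ν(x)) / (N + n). Then for all x, ν(x) ≤ ((N + n)·C / (N + n·C)) · ρ(x). -/
theorem mixture_concentratability
    {X : Type*} (μ ν : X → ℝ) (N n C : ℝ)
    (hμ : ∀ x, 0 ≤ μ x) (hν : ∀ x, 0 ≤ ν x)
    (hN : 0 < N) (hn : 0 < n) (hC : 0 < C)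
    (hratio : ∀ x, ν x ≤ C * μ x) :
    ∀ x, ν x ≤ ((N + n) * C / (N + n * C)) * ((N * μ x + n * ν x) / (N + n)) := by
  intro x
  have h1 : 0 < N + n * C := by positivity
  have h2 : 0 < N + n := by positivity
  rw [div_mul_div_comm, le_div_iff₀ (by positivity)]
  nlinarith [hratio x, hν x, mul_le_mul_of_nonneg_left (hratio x) hN.le]
end

section
/- Let S and A be finite nonempty types, γ ∈ [0,1), r : S × A → ℝ, P : S × A → S → ℝ a transition kernel (P(s,a,·) nonnegative with Σ_{s'} P(s,a,s') = 1 for every (s,a)), and π : S → A → ℝ a policy (π(s,·) nonnegative with Σ_a π(s,a) = 1 for every s). Let d : S × A → ℝ be a nonnegative weight function that is stationary under (P, π), i.e., for all (s',a'): Σ_{(s,a)} d(s,a)·P(s,a,s')·π(s',a') = d(s',a'). Define the Bellman operator (T^π f)(s,a) := r(s,a) + γ · Σ_{s'} P(s,a,s') · Σ_{a'} π(s',a') · f(s',a'). Then for all f, f' : S × A → ℝ, sqrt(Σ_{(s,a)} d(s,a)·((T^π f)(s,a) − (T^π f')(s,a))²) ≤ γ · sqrt(Σ_{(s,a)} d(s,a)·(f(s,a)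 − f'(s,a))²), i.e., T^π is a γ-contraction in the d-weighted L2 norm. -/
theorem bellman_operator_contraction
    {S A : Type*} [Fintype S] [Fintype A] [Nonempty S] [Nonempty A]
    (γ : ℝ) (hγ0 : 0 ≤ γ) (hγ1 : γ < 1)
    (r : S × A → ℝ) (P : S × A → S → ℝ) (π : S → A → ℝ)
    (hP0 : ∀ sa s', 0 ≤ P sa s') (hP1 : ∀ sa, ∑ s', P sa s' = 1)
    (hπ0 : ∀ s a, 0 ≤ π s a) (hπ1 : ∀ s, ∑ a, π s a = 1)
    (d : S × A → ℝ) (hd0 : ∀ sa, 0 ≤ d sa)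
    (hstat : ∀ s' a', ∑ sa : S × A, d sa * P sa s' * π s' a' = d (s', a')) :
    ∀ f f' : S × A → ℝ,
      Real.sqrt (∑ sa : S × A, d sa *
          ((r sa + γ * ∑ s', P sa s' * ∑ a', π s' a' * f (s', a')) -
           (r sa + γ * ∑ s', P sa s' * ∑ a', π s' a' * f' (s', a'))) ^ 2) ≤
        γ * Real.sqrt (∑ sa : S × A, d sa * (f sa - f' sa) ^ 2) := by
  intro f f'
  set g : S × A → ℝ := fun sa => f sa - f' sa with hg
  set w : S × A → S × A → ℝ := fun sa t => P sa t.1 * π t.1 t.2 with hw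
  have hw0 : ∀ sa t, 0 ≤ w sa t := fun sa t => mul_nonneg (hP0 _ _) (hπ0 _ _)
  have hsum : ∀ (sa : S × A) (h : S × A → ℝ),
      ∑ s', P sa s' * ∑ a', π s' a' * h (s', a') = ∑ t : S × A, w sa t * h t := by
    intro sa h
    rw [Fintype.sum_prod_type]
    refine Finset.sum_congr rfl fun s' _ => ?_
    rw [Finset.mul_sum]
    exact Finset.sum_congr rfl fun a' _ => by simp only [hw]; ring
  have hw1 : ∀ sa, ∑ t : S × A, w sa t = 1 := by
    intro sa
    have := hsum sa (fun _ => 1)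
    simp only [mul_one] at this
    rw [← this]
    simp [hπ1, hP1]
  have key : ∀ sa : S × A,
      ((r sa + γ * ∑ s', P sa s' * ∑ a', π s' a' * f (s', a')) -
       (r sa + γ * ∑ s', P sa s' * ∑ a', π s' a' * f' (s', a'))) =
      γ * ∑ t : S × A, w sa t * g t := by
    intro sa
    rw [hsum sa f, hsum sa f']
    rw [show (∑ t : S × A, w sa t * g t)
        = (∑ t : S × A, w sa t * f t) - ∑ t : S × A, w sa t * f' t by
      rw [← Finset.sum_sub_distrib]
      exact Finset.sum_congr rfl fun t _ => by simp only [hg]; ring]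
    ring
  have jensen : ∀ sa : S × A,
      (∑ t : S × A, w sa t * g t) ^ 2 ≤ ∑ t : S × A, w sa t * g t ^ 2 := by
    intro sa
    have := Finset.sum_sq_le_sum_mul_sum_of_sq_eq_mul (Finset.univ : Finset (S × A))
      (r := fun t => w sa t * g t) (f := fun t => w sa t) (g := fun t => w sa t * g t ^ 2)
      (fun t _ => hw0 sa t) (fun t _ => mul_nonneg (hw0 sa t) (sq_nonneg _))
      (fun t _ => by ring)
    rwa [hw1 sa, one_mul] at this
  have step : (∑ sa : S × A, d sa *
      ((r sa + γ * ∑ s', P sa s' * ∑ a', π s' a' * f (s', a')) -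
       (r sa + γ * ∑ s', P sa s' * ∑ a', π s' a' * f' (s', a'))) ^ 2)
      ≤ γ ^ 2 * ∑ sa : S × A, d sa * g sa ^ 2 := by
    calc (∑ sa : S × A, d sa *
        ((r sa + γ * ∑ s', P sa s' * ∑ a', π s' a' * f (s', a')) -
         (r sa + γ * ∑ s', P sa s' * ∑ a', π s' a' * f' (s', a'))) ^ 2)
        = γ ^ 2 * ∑ sa : S × A, d sa * (∑ t : S × A, w sa t * g t) ^ 2 := by
          rw [Finset.mul_sum]
          exact Finset.sum_congr rfl fun sa _ => by rw [key sa]; ring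
      _ ≤ γ ^ 2 * ∑ sa : S × A, d sa * ∑ t : S × A, w sa t * g t ^ 2 := by
          apply mul_le_mul_of_nonneg_left _ (sq_nonneg γ)
          exact Finset.sum_le_sum fun sa _ =>
            mul_le_mul_of_nonneg_left (jensen sa) (hd0 sa)
      _ = γ ^ 2 * ∑ sa : S × A, d sa * g sa ^ 2 := by
          congr 1
          calc (∑ sa : S × A, d sa * ∑ t : S × A, w sa t * g t ^ 2)
              = ∑ sa : S × A, ∑ t : S × A, d sa * w sa t * g t ^ 2 := by
                refine Finset.sum_congr rfl fun sa _ => ?_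
                rw [Finset.mul_sum]
                exact Finset.sum_congr rfl fun t _ => by ring
            _ = ∑ t : S × A, ∑ sa : S × A, d sa * w sa t * g t ^ 2 :=
                Finset.sum_comm
            _ = ∑ t : S × A, d t * g t ^ 2 := by
                refine Finset.sum_congr rfl fun t _ => ?_
                rw [← Finset.sum_mul]
                have := hstat t.1 t.2
                simp only [hw]
                rw [show (∑ sa : S × A, d sa * (P sa t.1 * π t.1 t.2))
                  = ∑ sa : S × A, d sa * P sa t.1 * π t.1 t.2 from
                  Finset.sum_congr rfl fun sa _ => by ring, this]
  calc Real.sqrt (∑ sa : S × A, d sa *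
        ((r sa + γ * ∑ s', P sa s' * ∑ a', π s' a' * f (s', a')) -
         (r sa + γ * ∑ s', P sa s' * ∑ a', π s' a' * f' (s', a'))) ^ 2)
      ≤ Real.sqrt (γ ^ 2 * ∑ sa : S × A, d sa * g sa ^ 2) := Real.sqrt_le_sqrt step
    _ = γ * Real.sqrt (∑ sa : S × A, d sa * (f sa - f' sa) ^ 2) := by
        rw [Real.sqrt_mul (sq_nonneg γ), Real.sqrt_sq hγ0]
end

section
/- Let S and A be finite nonempty types, γ ∈ [0,1), r : S × A → ℝ, and P : S × A → S → ℝ a transition kernel (P(s,a,·) nonnegative with Σ_{s'} P(s,a,s') = 1). Define the optimality Bellman operator (T f)(s,a) := r(s,a) + γ · Σ_{s'} P(s,a,s') · (max over a' of f(s',a')). Let ν : S × A → ℝ be a nonnegative weight function and define its pushforward μ(s') := Σ_{(s,a)} ν(s,a)·P(s,a,s'). Let f, f' : S × A → ℝ and let π̂ : S → A be a selection such that for every s, π̂(s) maximizes a ↦ max(f(s,a), f'(s,a)). Then sqrt(Σ_{(s,a)} ν(s,a)·((T f)(s,a) − (T f')(s,a))²) ≤ γ · sqrt(Σ_{s'}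 μ(s')·(f(s', π̂(s')) − f'(s', π̂(s')))²). -/
theorem optimality_bellman_contraction_greedy
    {S A : Type*} [Fintype S] [Fintype A] [Nonempty S] [Nonempty A]
    (γ : ℝ) (hγ0 : 0 ≤ γ) (hγ1 : γ < 1)
    (r : S × A → ℝ) (P : S × A → S → ℝ)
    (hP0 : ∀ sa s', 0 ≤ P sa s') (hP1 : ∀ sa, ∑ s', P sa s' = 1)
    (ν : S × A → ℝ) (hν : ∀ sa, 0 ≤ ν sa)
    (f f' : S × A → ℝ) (πhat : S → A)
    (hgreedy : ∀ s a, max (f (s, a)) (f' (s, a)) ≤ max (f (s, πhat s)) (f' (s, πhat s))) :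
    Real.sqrt (∑ sa : S × A, ν sa *
        ((r sa + γ * ∑ s', P sa s' * Finset.univ.sup' Finset.univ_nonempty (fun a' => f (s', a'))) -
         (r sa + γ * ∑ s', P sa s' * Finset.univ.sup' Finset.univ_nonempty (fun a' => f' (s', a')))) ^ 2) ≤
      γ * Real.sqrt (∑ s', (∑ sa : S × A, ν sa * P sa s') *
        (f (s', πhat s') - f' (s', πhat s')) ^ 2) := by
  classical
  set F : S → ℝ := fun s' => Finset.univ.sup' Finset.univ_nonempty (fun a' => f (s', a')) with hF
  set F' : S → ℝ := fun s' => Finset.univ.sup' Finset.univ_nonempty (fun a' => f' (s', a')) with hF'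
  set g : S → ℝ := fun s' => F s' - F' s' with hg
  set d : S → ℝ := fun s' => f (s', πhat s') - f' (s', πhat s') with hd
  -- pointwise bound
  have hgd : ∀ s', (g s')^2 ≤ (d s')^2 := by
    intro s'
    have hFle : F s' ≤ max (f (s', πhat s')) (f' (s', πhat s')) := by
      apply Finset.sup'_le
      intro a _
      exact le_trans (le_max_left _ _) (hgreedy s' a)
    have hF'le : F' s' ≤ max (f (s', πhat s')) (f' (s', πhat s')) := by
      apply Finset.sup'_le
      intro a _
      exact le_trans (le_max_right _ _) (hgreedy s' a)
    have hFge : f (s', πhat s') ≤ F s' :=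
      Finset.le_sup' (fun a' => f (s', a')) (Finset.mem_univ (πhat s'))
    have hF'ge : f' (s', πhat s') ≤ F' s' :=
      Finset.le_sup' (fun a' => f' (s', a')) (Finset.mem_univ (πhat s'))
    have h1 : g s' ≤ |d s'| := by
      rcases le_total (f' (s', πhat s')) (f (s', πhat s')) with h | h
      · rw [max_eq_left h] at hFle
        have hda := le_abs_self (d s')
        simp only [hg, hd] at *
        linarith
      · rw [max_eq_right h] at hFle
        have hda := abs_nonneg (d s')
        simp only [hg] at *
        linarith
    have h2 : -(g s') ≤ |d s'| := by
      rcases le_total (f (s', πhat s')) (f' (s', πhat s')) with h | h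
      · rw [max_eq_right h] at hF'le
        have hda := neg_le_abs (d s')
        simp only [hg, hd] at *
        linarith
      · rw [max_eq_left h] at hF'le
        have hda := abs_nonneg (d s')
        simp only [hg] at *
        linarith
    have habs : |g s'| ≤ |d s'| := abs_le.mpr ⟨by linarith, h1⟩
    calc (g s')^2 = |g s'|^2 := (sq_abs _).symm
      _ ≤ |d s'|^2 := pow_le_pow_left₀ (abs_nonneg _) habs 2
      _ = (d s')^2 := sq_abs _
  -- rewrite LHS sum
  have hrw : ∀ sa : S × A, ν sa *
      ((r sa + γ * ∑ s', P sa s' * F s') - (r sa + γ * ∑ s', P sa s' * F' s')) ^ 2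
      = γ^2 * (ν sa * (∑ s', P sa s' * g s')^2) := by
    intro sa
    have : (∑ s', P sa s' * F s') - (∑ s', P sa s' * F' s') = ∑ s', P sa s' * g s' := by
      rw [← Finset.sum_sub_distrib]
      congr 1; ext s'; simp [hg]; ring
    rw [show (r sa + γ * ∑ s', P sa s' * F s') - (r sa + γ * ∑ s', P sa s' * F' s')
        = γ * ((∑ s', P sa s' * F s') - (∑ s', P sa s' * F' s')) by ring, this]
    ring
  -- Jensen via Cauchy-Schwarz
  have hjensen : ∀ sa : S × A, (∑ s', P sa s' * g s')^2 ≤ ∑ s', P sa s' * (g s')^2 := by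
    intro sa
    have hcs := Finset.sum_mul_sq_le_sq_mul_sq Finset.univ
      (fun s' => Real.sqrt (P sa s')) (fun s' => Real.sqrt (P sa s') * g s')
    have h1 : ∀ s', Real.sqrt (P sa s') * (Real.sqrt (P sa s') * g s') = P sa s' * g s' := by
      intro s'; rw [← mul_assoc, Real.mul_self_sqrt (hP0 sa s')]
    have h2 : ∀ s', Real.sqrt (P sa s') ^ 2 = P sa s' := fun s' => Real.sq_sqrt (hP0 sa s')
    have h3 : ∀ s', (Real.sqrt (P sa s') * g s') ^ 2 = P sa s' * (g s')^2 := by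
      intro s'; rw [mul_pow, Real.sq_sqrt (hP0 sa s')]
    simp only [h1, h2, h3, hP1 sa, one_mul] at hcs
    exact hcs
  have hsum : (∑ sa : S × A, ν sa *
      ((r sa + γ * ∑ s', P sa s' * F s') - (r sa + γ * ∑ s', P sa s' * F' s')) ^ 2)
      ≤ γ^2 * ∑ s', (∑ sa : S × A, ν sa * P sa s') * (d s')^2 := by
    calc (∑ sa : S × A, ν sa *
        ((r sa + γ * ∑ s', P sa s' * F s') - (r sa + γ * ∑ s', P sa s' * F' s')) ^ 2)
        = γ^2 * ∑ sa : S × A, ν sa * (∑ s', P sa s' * g s')^2 := by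
          rw [Finset.mul_sum]; exact Finset.sum_congr rfl (fun sa _ => hrw sa)
      _ ≤ γ^2 * ∑ sa : S × A, ν sa * ∑ s', P sa s' * (g s')^2 := by
          apply mul_le_mul_of_nonneg_left _ (sq_nonneg γ)
          apply Finset.sum_le_sum
          intro sa _
          exact mul_le_mul_of_nonneg_left (hjensen sa) (hν sa)
      _ = γ^2 * ∑ s', (∑ sa : S × A, ν sa * P sa s') * (g s')^2 := by
          congr 1
          simp only [Finset.mul_sum, Finset.sum_mul]
          rw [Finset.sum_comm]
          apply Finset.sum_congr rfl
          intro s' _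
          apply Finset.sum_congr rfl
          intro sa _
          ring
      _ ≤ γ^2 * ∑ s', (∑ sa : S × A, ν sa * P sa s') * (d s')^2 := by
          apply mul_le_mul_of_nonneg_left _ (sq_nonneg γ)
          apply Finset.sum_le_sum
          intro s' _
          apply mul_le_mul_of_nonneg_left (hgd s')
          exact Finset.sum_nonneg fun sa _ => mul_nonneg (hν sa) (hP0 sa s')
  calc Real.sqrt (∑ sa : S × A, ν sa *
        ((r sa + γ * ∑ s', P sa s' * F s') - (r sa + γ * ∑ s', P sa s' * F' s')) ^ 2)
      ≤ Real.sqrt (γ^2 * ∑ s', (∑ sa : S × A, ν sa * P sa s') * (d s')^2) :=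
        Real.sqrt_le_sqrt hsum
    _ = γ * Real.sqrt (∑ s', (∑ sa : S × A, ν sa * P sa s') * (d s')^2) := by
        rw [Real.sqrt_mul (sq_nonneg γ), Real.sqrt_sq hγ0]
end

section
/- Let X and Y be finite types. Let p₀ : X → ℝ be a strictly positive probability mass function, E : X → ℝ an energy function, Z := Σ_x p₀(x)·exp(−E(x)), and q₀(x) := p₀(x)·exp(−E(x)) / Z. Let k : X → Y → ℝ be a nonnegative kernel and define p_t(y) := Σ_x k(x,y)·p₀(x) and q_t(y) := Σ_x k(x,y)·q₀(x). Fix y with p_t(y) > 0, let the posterior be post(x|y) := k(x,y)·p₀(x) / p_t(y), and define the intermediate energy E_t(y) := −log(Σ_x post(x|y)·exp(−E(x))). Then q_t(y) = p_t(y) · exp(−E_t(y)) / Z. -/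
theorem intermediate_energy_identity
    {X Y : Type*} [Fintype X] [Fintype Y]
    (p₀ : X → ℝ) (hp₀ : ∀ x, 0 < p₀ x) (hp₀sum : ∑ x, p₀ x = 1)
    (E : X → ℝ)
    (Z : ℝ) (hZ : Z = ∑ x, p₀ x * Real.exp (-E x))
    (q₀ : X → ℝ) (hq₀ : ∀ x, q₀ x = p₀ x * Real.exp (-E x) / Z)
    (k : X → Y → ℝ) (hk : ∀ x y, 0 ≤ k x y)
    (pt qt : Y → ℝ)
    (hpt : ∀ y, pt y = ∑ x, k x y * p₀ x)
    (hqt : ∀ y, qt y = ∑ x, k x y * q₀ x)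
    (y : Y) (hpty : 0 < pt y)
    (post : X → ℝ) (hpost : ∀ x, post x = k x y * p₀ x / pt y)
    (Et : ℝ) (hEt : Et = -Real.log (∑ x, post x * Real.exp (-E x))) :
    qt y = pt y * Real.exp (-Et) / Z := by
  set S := ∑ x, post x * Real.exp (-E x) with hS
  have hSeq : S = (∑ x, k x y * p₀ x * Real.exp (-E x)) / pt y := by
    rw [hS, Finset.sum_div]
    refine Finset.sum_congr rfl fun x _ => ?_
    rw [hpost x]; ring
  have hnum_pos : 0 < ∑ x, k x y * p₀ x * Real.exp (-E x) := by
    have h1 : 0 < ∑ x, k x y * p₀ x := hpt y ▸ hpty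
    obtain ⟨x, -, hx⟩ := Finset.exists_lt_of_sum_lt
      (show ∑ _x : X, (0:ℝ) < ∑ x, k x y * p₀ x by simpa using h1)
    refine Finset.sum_pos' (fun i _ => mul_nonneg (mul_nonneg (hk i y) (hp₀ i).le) (Real.exp_pos _).le) ⟨x, Finset.mem_univ x, ?_⟩
    exact mul_pos hx (Real.exp_pos _)
  have hSpos : 0 < S := by rw [hSeq]; positivity
  have hexp : Real.exp (-Et) = S := by
    rw [hEt, neg_neg, Real.exp_log hSpos]
  rw [hexp, hSeq, hqt]
  have : ∀ x, k x y * q₀ x = k x y * p₀ x * Real.exp (-E x) / Z := by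
    intro x; rw [hq₀ x]; ring
  simp_rw [this]
  rw [← Finset.sum_div]
  field_simp
end

section
/- Let S be a finite type, γ ∈ [0,1), ρ : S → ℝ a nonnegative function with Σ_s ρ(s) = 1, and K, K̃ : S → S → ℝ two row-stochastic kernels (nonnegative, rows summing to 1). Let d, d̃ : S → ℝ be nonnegative functions with Σ_s d(s) = 1 and Σ_s d̃(s) = 1 satisfying the occupancy fixed-point equations d(s') = (1−γ)·ρ(s') + γ·Σ_s d(s)·K(s,s') and d̃(s') = (1−γ)·ρ(s') + γ·Σ_s d̃(s)·K̃(s,s') for all s'. Suppose ε ≥ 0 satisfies (1/2)·Σ_{s'} |K(s,s') − K̃(s,s')| ≤ ε for every s. Then (1/2)·Σ_{s'} |d(s') − d̃(s')| ≤ γ·ε / (1 − γ). -/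
theorem occupancy_perturbation_bound
    {S : Type*} [Fintype S]
    (γ : ℝ) (hγ0 : 0 ≤ γ) (hγ1 : γ < 1)
    (ρ : S → ℝ) (hρ0 : ∀ s, 0 ≤ ρ s) (hρ1 : ∑ s, ρ s = 1)
    (K Ktil : S → S → ℝ)
    (hK0 : ∀ s s', 0 ≤ K s s') (hK1 : ∀ s, ∑ s', K s s' = 1)
    (hKtil0 : ∀ s s', 0 ≤ Ktil s s') (hKtil1 : ∀ s, ∑ s', Ktil s s' = 1)
    (d dtil : S → ℝ)
    (hd0 : ∀ s, 0 ≤ d s) (hd1 : ∑ s, d s = 1)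
    (hdtil0 : ∀ s, 0 ≤ dtil s) (hdtil1 : ∑ s, dtil s = 1)
    (hd : ∀ s', d s' = (1 - γ) * ρ s' + γ * ∑ s, d s * K s s')
    (hdtil : ∀ s', dtil s' = (1 - γ) * ρ s' + γ * ∑ s, dtil s * Ktil s s')
    (ε : ℝ) (hε : 0 ≤ ε)
    (hmodel : ∀ s, (1 / 2) * ∑ s', |K s s' - Ktil s s'| ≤ ε) :
    (1 / 2) * ∑ s', |d s' - dtil s'| ≤ γ * ε / (1 - γ) := by
  set D := ∑ s', |d s' - dtil s'| with hDdef
  have hγpos : (0:ℝ) < 1 - γ := by linarith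
  have hpoint : ∀ s', |d s' - dtil s'| ≤
      γ * ((∑ s, |d s - dtil s| * K s s') + ∑ s, dtil s * |K s s' - Ktil s s'|) := by
    intro s'
    have h1 : d s' - dtil s' =
        γ * ∑ s, ((d s - dtil s) * K s s' + dtil s * (K s s' - Ktil s s')) := by
      have : ∑ s, ((d s - dtil s) * K s s' + dtil s * (K s s' - Ktil s s')) =
          (∑ s, d s * K s s') - ∑ s, dtil s * Ktil s s' := by
        rw [← Finset.sum_sub_distrib]
        exact Finset.sum_congr rfl (fun s _ => by ring)
      rw [this, hd s', hdtil s']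
      ring
    calc |d s' - dtil s'|
        = γ * |∑ s, ((d s - dtil s) * K s s' + dtil s * (K s s' - Ktil s s'))| := by
          rw [h1, abs_mul, abs_of_nonneg hγ0]
      _ ≤ γ * ∑ s, |(d s - dtil s) * K s s' + dtil s * (K s s' - Ktil s s')| := by
          gcongr; exact Finset.abs_sum_le_sum_abs _ _
      _ ≤ γ * ((∑ s, |d s - dtil s| * K s s') + ∑ s, dtil s * |K s s' - Ktil s s'|) := by
          rw [← Finset.sum_add_distrib]
          gcongr with s _
          calc |(d s - dtil s) * K s s' + dtil s * (K s s' - Ktil s s')|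
              ≤ |(d s - dtil s) * K s s'| + |dtil s * (K s s' - Ktil s s')| := abs_add_le _ _
            _ = |d s - dtil s| * K s s' + dtil s * |K s s' - Ktil s s'| := by
                rw [abs_mul, abs_mul, abs_of_nonneg (hK0 s s'), abs_of_nonneg (hdtil0 s)]
  have key : D ≤ γ * D + γ * (2 * ε) := by
    have hsum : D ≤ ∑ s', γ * ((∑ s, |d s - dtil s| * K s s') + ∑ s, dtil s * |K s s' - Ktil s s'|) :=
      Finset.sum_le_sum (fun s' _ => hpoint s')
    have h2 : ∑ s', γ * ((∑ s, |d s - dtil s| * K s s') + ∑ s, dtil s * |K s s' - Ktil s s'|)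
        = γ * ((∑ s', ∑ s, |d s - dtil s| * K s s') + ∑ s', ∑ s, dtil s * |K s s' - Ktil s s'|) := by
      rw [← Finset.mul_sum, Finset.sum_add_distrib]
    have h3 : (∑ s', ∑ s, |d s - dtil s| * K s s') = D := by
      rw [Finset.sum_comm]
      simp only [← Finset.mul_sum]
      simp [hK1, hDdef]
    have h4 : (∑ s', ∑ s, dtil s * |K s s' - Ktil s s'|) ≤ 2 * ε := by
      rw [Finset.sum_comm]
      calc ∑ s, ∑ s', dtil s * |K s s' - Ktil s s'|
          = ∑ s, dtil s * ∑ s', |K s s' - Ktil s s'| := by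
            simp [Finset.mul_sum]
        _ ≤ ∑ s, dtil s * (2 * ε) := by
            apply Finset.sum_le_sum
            intro s _
            have := hmodel s
            have h := hdtil0 s
            nlinarith
        _ = 2 * ε := by rw [← Finset.sum_mul, hdtil1, one_mul]
    calc D ≤ γ * ((∑ s', ∑ s, |d s - dtil s| * K s s') + ∑ s', ∑ s, dtil s * |K s s' - Ktil s s'|) := by
          rw [← h2]; exact hsum
      _ ≤ γ * (D + 2 * ε) := by gcongr; rw [h3]
      _ = γ * D + γ * (2 * ε) := by ring
  rw [le_div_iff₀ hγpos]
  nlinarith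
end

section
/- Let S and A be finite nonempty types, γ ∈ [0,1), r : S × A → ℝ, P : S × A → S → ℝ a transition kernel (rows nonnegative summing to 1), and π, π' : S → A → ℝ two policies (rows nonnegative summing to 1). Let ρ₀ : S → ℝ be nonnegative. Suppose Q' : S × A → ℝ satisfies the Bellman equation for π': Q'(s,a) = r(s,a) + γ·Σ_{s'} P(s,a,s')·Σ_{a'} π'(s',a')·Q'(s',a'), and Q : S × A → ℝ satisfies the Bellman equation for π: Q(s,a) = r(s,a) + γ·Σ_{s'} P(s,a,s')·Σ_{a'} π(s',a')·Q(s',a'). Define V'(s) := Σ_a π'(s,a)·Q'(s,a) and V(s) := Σ_a π(s,a)·Q(s,a), and J(π') := Σ_s ρ₀(s)·V'(s), J(π) := Σ_s ρ₀(s)·V(s). Let d : S → ℝ be nonnegative and satisfy the (unnormalized) occupancy equation of π: d(s') = ρ₀(s') + γ·Σ_{(s,a)} d(s)·π(s,a)·P(s,a,s') for all s'. Then J(π') − J(π) = Σ_s d(s) · (V'(s) − Σ_a π(s,a)·Q'(s,a)). -/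
theorem performance_difference_identity
    {S A : Type*} [Fintype S] [Fintype A] [Nonempty S] [Nonempty A]
    (γ : ℝ) (hγ0 : 0 ≤ γ) (hγ1 : γ < 1)
    (r : S × A → ℝ) (P : S × A → S → ℝ)
    (hP0 : ∀ sa s', 0 ≤ P sa s') (hP1 : ∀ sa, ∑ s', P sa s' = 1)
    (π π' : S → A → ℝ)
    (hπ0 : ∀ s a, 0 ≤ π s a) (hπ1 : ∀ s, ∑ a, π s a = 1)
    (hπ'0 : ∀ s a, 0 ≤ π' s a) (hπ'1 : ∀ s, ∑ a, π' s a = 1)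
    (ρ₀ : S → ℝ) (hρ₀ : ∀ s, 0 ≤ ρ₀ s)
    (Q Q' : S × A → ℝ)
    (hQ' : ∀ s a, Q' (s, a) =
      r (s, a) + γ * ∑ s', P (s, a) s' * ∑ a', π' s' a' * Q' (s', a'))
    (hQ : ∀ s a, Q (s, a) =
      r (s, a) + γ * ∑ s', P (s, a) s' * ∑ a', π s' a' * Q (s', a'))
    (d : S → ℝ) (hd0 : ∀ s, 0 ≤ d s)
    (hocc : ∀ s', d s' = ρ₀ s' + γ * ∑ sa : S × A, d sa.1 * π sa.1 sa.2 * P sa s') :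
    (∑ s, ρ₀ s * ∑ a, π' s a * Q' (s, a)) - (∑ s, ρ₀ s * ∑ a, π s a * Q (s, a)) =
      ∑ s, d s * ((∑ a, π' s a * Q' (s, a)) - ∑ a, π s a * Q' (s, a)) := by
  classical
  set V' : S → ℝ := fun s => ∑ a, π' s a * Q' (s, a) with hV'
  set V : S → ℝ := fun s => ∑ a, π s a * Q (s, a) with hV
  set f : S → ℝ := fun s => ∑ a, π s a * Q' (s, a) with hf
  -- difference of Q-functions
  have hdiff : ∀ s a, Q' (s, a) - Q (s, a)
      = γ * ∑ s', P (s, a) s' * (V' s' - V s') := by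
    intro s a
    rw [hQ' s a, hQ s a]
    have : ∀ s', P (s, a) s' * (V' s' - V s')
        = P (s, a) s' * V' s' - P (s, a) s' * V s' := fun s' => by ring
    simp only [this, Finset.sum_sub_distrib]
    ring
  -- key: ∑ d (f - V) = ∑ (d - ρ₀)(V' - V)
  have key : ∑ s, d s * (f s - V s) = ∑ s, (d s - ρ₀ s) * (V' s - V s) := by
    have h1 : ∀ s, d s * (f s - V s)
        = ∑ a, d s * π s a * (Q' (s, a) - Q (s, a)) := by
      intro s
      simp only [hf, hV, ← Finset.sum_sub_distrib, Finset.mul_sum]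
      exact Finset.sum_congr rfl fun a _ => by ring
    have h2 : ∀ s, d s * (f s - V s)
        = ∑ a, ∑ s', γ * (d s * π s a * P (s, a) s') * (V' s' - V s') := by
      intro s
      rw [h1 s]
      refine Finset.sum_congr rfl fun a _ => ?_
      rw [hdiff s a, Finset.mul_sum, Finset.mul_sum]
      exact Finset.sum_congr rfl fun s' _ => by ring
    calc ∑ s, d s * (f s - V s)
        = ∑ s', (γ * ∑ sa : S × A, d sa.1 * π sa.1 sa.2 * P sa s') * (V' s' - V s') := by
          simp only [h2]
          have step1 : ∀ s : S, ∑ a, ∑ s', γ * (d s * π s a * P (s, a) s') * (V' s' - V s')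
              = ∑ s', ∑ a, γ * (d s * π s a * P (s, a) s') * (V' s' - V s') :=
            fun s => Finset.sum_comm
          simp only [step1]
          rw [Finset.sum_comm]
          simp only [Finset.mul_sum, Finset.sum_mul, Fintype.sum_prod_type]
      _ = ∑ s', (d s' - ρ₀ s') * (V' s' - V s') := by
          refine Finset.sum_congr rfl fun s' _ => ?_
          have := hocc s'
          have : γ * ∑ sa : S × A, d sa.1 * π sa.1 sa.2 * P sa s' = d s' - ρ₀ s' := by
            linarith [hocc s']
          rw [this]
  -- conclude
  have expand : ∑ s, d s * (V' s - f s)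
      = ∑ s, d s * (V' s - V s) - ∑ s, d s * (f s - V s) := by
    rw [← Finset.sum_sub_distrib]
    exact Finset.sum_congr rfl fun s _ => by ring
  have expand2 : ∑ s, (d s - ρ₀ s) * (V' s - V s)
      = ∑ s, d s * (V' s - V s) - ∑ s, ρ₀ s * (V' s - V s) := by
    rw [← Finset.sum_sub_distrib]
    exact Finset.sum_congr rfl fun s _ => by ring
  have expand3 : ∑ s, ρ₀ s * (V' s - V s)
      = (∑ s, ρ₀ s * V' s) - ∑ s, ρ₀ s * V s := by
    rw [← Finset.sum_sub_distrib]
    exact Finset.sum_congr rfl fun s _ => by ring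
  show (∑ s, ρ₀ s * V' s) - (∑ s, ρ₀ s * V s) = ∑ s, d s * (V' s - f s)
  linarith [key, expand, expand2, expand3]
end

section
/- Let X be a finite type and p, q : X → ℝ strictly positive probability mass functions (Σ_x p(x) = 1 and Σ_x q(x) = 1). For D : X → ℝ with 0 < D(x) < 1 for all x, define V(D) := Σ_x p(x)·log(D(x)) + Σ_x q(x)·log(1 − D(x)). Define m(x) := (p(x) + q(x))/2, KL(u‖v) := Σ_x u(x)·log(u(x)/v(x)), and the Jensen–Shannon divergence D_JS(p,q) := (1/2)·(KL(p‖m) + KL(q‖m)). Then for every such D, V(D) ≤ −log 4 + 2·D_JS(p,q), and equality holds for D*(x) := p(x)/(p(x) + q(x)). -/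
theorem gan_optimal_discriminator
    {X : Type*} [Fintype X]
    (p q : X → ℝ) (hp : ∀ x, 0 < p x) (hq : ∀ x, 0 < q x)
    (hpsum : ∑ x, p x = 1) (hqsum : ∑ x, q x = 1) :
    (∀ D : X → ℝ, (∀ x, 0 < D x ∧ D x < 1) →
      (∑ x, p x * Real.log (D x)) + (∑ x, q x * Real.log (1 - D x)) ≤
        -Real.log 4 + 2 * ((1 / 2) *
          ((∑ x, p x * Real.log (p x / ((p x + q x) / 2))) +
           (∑ x, q x * Real.log (q x / ((p x + q x) / 2))))))
    ∧
    (∑ x, p x * Real.log (p x / (p x + q x))) +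
      (∑ x, q x * Real.log (1 - p x / (p x + q x))) =
        -Real.log 4 + 2 * ((1 / 2) *
          ((∑ x, p x * Real.log (p x / ((p x + q x) / 2))) +
           (∑ x, q x * Real.log (q x / ((p x + q x) / 2))))) := by
  have hpq : ∀ x, 0 < p x + q x := fun x => add_pos (hp x) (hq x)
  have hRHS : -Real.log 4 + 2 * ((1 / 2) *
          ((∑ x, p x * Real.log (p x / ((p x + q x) / 2))) +
           (∑ x, q x * Real.log (q x / ((p x + q x) / 2)))))
      = (∑ x, p x * Real.log (p x / (p x + q x))) +
        (∑ x, q x * Real.log (q x / (p x + q x))) := by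
    have h4 : Real.log 4 = 2 * Real.log 2 := by
      rw [show (4:ℝ) = 2^2 by norm_num, Real.log_pow]; push_cast; ring
    have e1 : ∀ x, Real.log (p x / ((p x + q x) / 2))
        = Real.log (p x / (p x + q x)) + Real.log 2 := by
      intro x
      rw [show p x / ((p x + q x) / 2) = (p x / (p x + q x)) * 2 by
        field_simp]
      exact Real.log_mul (ne_of_gt (div_pos (hp x) (hpq x))) two_ne_zero
    have e2 : ∀ x, Real.log (q x / ((p x + q x) / 2))
        = Real.log (q x / (p x + q x)) + Real.log 2 := by
      intro x
      rw [show q x / ((p x + q x) / 2) = (q x / (p x + q x)) * 2 by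
        field_simp]
      exact Real.log_mul (ne_of_gt (div_pos (hq x) (hpq x))) two_ne_zero
    simp only [e1, e2, mul_add, Finset.sum_add_distrib, ← Finset.sum_mul,
      hpsum, hqsum]
    rw [h4]; ring
  constructor
  · intro D hD
    rw [hRHS]
    have key1 : ∀ x, p x * Real.log (D x) ≤
        p x * Real.log (p x / (p x + q x)) + ((p x + q x) * D x - p x) := by
      intro x
      have hDx := (hD x).1
      have h1 : Real.log (D x) - Real.log (p x / (p x + q x))
          = Real.log (D x * (p x + q x) / p x) := by
        rw [Real.log_div (ne_of_gt (mul_pos hDx (hpq x))) (ne_of_gt (hp x)),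
            Real.log_mul (ne_of_gt hDx) (ne_of_gt (hpq x)),
            Real.log_div (ne_of_gt (hp x)) (ne_of_gt (hpq x))]
        ring
      have h2 : Real.log (D x * (p x + q x) / p x) ≤ D x * (p x + q x) / p x - 1 :=
        Real.log_le_sub_one_of_pos (div_pos (mul_pos hDx (hpq x)) (hp x))
      have h3 : Real.log (D x) ≤ Real.log (p x / (p x + q x)) +
          (D x * (p x + q x) / p x - 1) := by linarith [h1 ▸ h2]
      have h4 := mul_le_mul_of_nonneg_left h3 (le_of_lt (hp x))
      have h5 : p x * (D x * (p x + q x) / p x - 1)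
          = (p x + q x) * D x - p x := by
        field_simp [(hp x).ne'] <;> ring
      nlinarith [h4, h5]
    have key2 : ∀ x, q x * Real.log (1 - D x) ≤
        q x * Real.log (q x / (p x + q x)) + ((p x + q x) * (1 - D x) - q x) := by
      intro x
      have hDx : 0 < 1 - D x := by linarith [(hD x).2]
      have h1 : Real.log (1 - D x) - Real.log (q x / (p x + q x))
          = Real.log ((1 - D x) * (p x + q x) / q x) := by
        rw [Real.log_div (ne_of_gt (mul_pos hDx (hpq x))) (ne_of_gt (hq x)),
            Real.log_mul (ne_of_gt hDx) (ne_of_gt (hpq x)),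
            Real.log_div (ne_of_gt (hq x)) (ne_of_gt (hpq x))]
        ring
      have h2 : Real.log ((1 - D x) * (p x + q x) / q x) ≤
          (1 - D x) * (p x + q x) / q x - 1 :=
        Real.log_le_sub_one_of_pos (div_pos (mul_pos hDx (hpq x)) (hq x))
      have h3 : Real.log (1 - D x) ≤ Real.log (q x / (p x + q x)) +
          ((1 - D x) * (p x + q x) / q x - 1) := by linarith [h1 ▸ h2]
      have h4 := mul_le_mul_of_nonneg_left h3 (le_of_lt (hq x))
      have h5 : q x * ((1 - D x) * (p x + q x) / q x - 1)
          = (p x + q x) * (1 - D x) - q x := by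
        field_simp [(hq x).ne'] <;> ring
      nlinarith [h4, h5]
    have s1 := Finset.sum_le_sum (s := Finset.univ) (fun x _ => key1 x)
    have s2 := Finset.sum_le_sum (s := Finset.univ) (fun x _ => key2 x)
    have hzero : (∑ x, ((p x + q x) * D x - p x)) +
        (∑ x, ((p x + q x) * (1 - D x) - q x)) = 0 := by
      rw [← Finset.sum_add_distrib]
      have : ∀ x, ((p x + q x) * D x - p x) + ((p x + q x) * (1 - D x) - q x)
          = (p x + q x) - (p x + q x) := by intro x; ring
      simp only [this, sub_self, Finset.sum_const_zero]
    simp only [Finset.sum_add_distrib] at s1 s2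
    linarith
  · rw [hRHS]
    congr 1
    apply Finset.sum_congr rfl
    intro x _
    have h' : q x / (p x + q x) + p x / (p x + q x) = 1 := by
      rw [← add_div, add_comm, div_self (hpq x).ne']
    have h : (1 : ℝ) - p x / (p x + q x) = q x / (p x + q x) := by linarith
    rw [h]
end

section
/- Let X be a finite type and μ, ν : X → ℝ strictly positive probability mass functions (Σ_x μ(x) = 1 and Σ_x ν(x) = 1). Fix a natural number K ≥ 1. For an energy function E : X → ℝ, define the population InfoNCE loss L(E) := − Σ over tuples (x₀, x₁, …, x_K) ∈ X^{K+1} of μ(x₀)·ν(x₁)·…·ν(x_K) · log( exp(−E(x₀)) / (exp(−E(x₀)) + Σ_{j=1}^K exp(−E(x_j))) ). Define E*(x) := −log(μ(x)/ν(x)). Then L(E*) ≤ L(E) for every E : X → ℝ. -/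
lemma gibbs_aux {n : ℕ} (a b : Fin (n+1) → ℝ) (ha : ∀ i, 0 < a i) (hb : ∀ i, 0 < b i) :
    ∑ i, a i * Real.log ((b i * ∑ j, a j) / (a i * ∑ j, b j)) ≤ 0 := by
  have hSa : 0 < ∑ j, a j := Finset.sum_pos (fun j _ => ha j) Finset.univ_nonempty
  have hSb : 0 < ∑ j, b j := Finset.sum_pos (fun j _ => hb j) Finset.univ_nonempty
  have key : ∀ i ∈ Finset.univ, a i * Real.log ((b i * ∑ j, a j) / (a i * ∑ j, b j))
      ≤ b i * ((∑ j, a j) / (∑ j, b j)) - a i := by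
    intro i _
    have hai := ha i
    have hbi := hb i
    have hpos : 0 < (b i * ∑ j, a j) / (a i * ∑ j, b j) := by positivity
    have h1 := Real.log_le_sub_one_of_pos hpos
    calc a i * Real.log ((b i * ∑ j, a j) / (a i * ∑ j, b j))
        ≤ a i * ((b i * ∑ j, a j) / (a i * ∑ j, b j) - 1) :=
          mul_le_mul_of_nonneg_left h1 hai.le
      _ = b i * ((∑ j, a j) / (∑ j, b j)) - a i := by field_simp
  calc ∑ i, a i * Real.log ((b i * ∑ j, a j) / (a i * ∑ j, b j))
      ≤ ∑ i, (b i * ((∑ j, a j) / (∑ j, b j)) - a i) := Finset.sum_le_sum key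
    _ = 0 := by
        rw [Finset.sum_sub_distrib, ← Finset.sum_mul]
        field_simp
        ring

lemma log_div_sub_log_div {a b Sa Sb : ℝ} (ha : 0 < a) (hb : 0 < b)
    (hSa : 0 < Sa) (hSb : 0 < Sb) :
    Real.log (b / Sb) - Real.log (a / Sa) = Real.log ((b * Sa) / (a * Sb)) := by
  rw [Real.log_div hb.ne' hSb.ne', Real.log_div ha.ne' hSa.ne',
    Real.log_div (mul_pos hb hSa).ne' (mul_pos ha hSb).ne',
    Real.log_mul hb.ne' hSa.ne', Real.log_mul ha.ne' hSb.ne']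
  ring

theorem infoNCE_population_minimizer
    {X : Type*} [Fintype X]
    (μ ν : X → ℝ) (hμ : ∀ x, 0 < μ x) (hν : ∀ x, 0 < ν x)
    (hμsum : ∑ x, μ x = 1) (hνsum : ∑ x, ν x = 1)
    (K : ℕ) (hK : 1 ≤ K)
    (L : (X → ℝ) → ℝ)
    (hL : ∀ E : X → ℝ,
      L E = -(∑ x₀ : X, ∑ xs : Fin K → X,
          (μ x₀ * ∏ j, ν (xs j)) *
            Real.log (Real.exp (-E x₀) /
              (Real.exp (-E x₀) + ∑ j, Real.exp (-E (xs j))))))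
    (Estar : X → ℝ) (hEstar : ∀ x, Estar x = -Real.log (μ x / ν x)) :
    ∀ E : X → ℝ, L Estar ≤ L E := by
  intro E
  rw [hL E, hL Estar, neg_le_neg_iff]
  set r : X → ℝ := fun x => μ x / ν x with hr
  have hrpos : ∀ x, 0 < r x := fun x => div_pos (hμ x) (hν x)
  have hEstarExp : ∀ x, Real.exp (-Estar x) = r x := by
    intro x; rw [hEstar x, neg_neg, Real.exp_log (hrpos x)]
  set g : X → ℝ := fun x => Real.exp (-E x) with hg
  have hgpos : ∀ x, 0 < g x := fun x => Real.exp_pos _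
  -- convert the double sum to a sum over tuples y : Fin (K+1) → X
  have conv : ∀ h : X → ℝ,
      (∑ x₀ : X, ∑ xs : Fin K → X, (μ x₀ * ∏ j, ν (xs j)) *
          Real.log (h x₀ / (h x₀ + ∑ j, h (xs j))))
      = ∑ y : Fin (K+1) → X, (∏ i, ν (y i)) *
          (r (y 0) * Real.log (h (y 0) / ∑ i, h (y i))) := by
    intro h
    rw [← Fintype.sum_prod_type']
    rw [← Equiv.sum_comp (Fin.consEquiv (fun _ : Fin (K+1) => X)).symm
      (fun p : X × (Fin K → X) => (μ p.1 * ∏ j, ν (p.2 j)) *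
        Real.log (h p.1 / (h p.1 + ∑ j, h (p.2 j))))]
    apply Finset.sum_congr rfl
    intro y _
    show (μ (y 0) * ∏ j : Fin K, ν (y (Fin.succ j))) *
        Real.log (h (y 0) / (h (y 0) + ∑ j : Fin K, h (y (Fin.succ j))))
      = (∏ i : Fin (K+1), ν (y i)) * (r (y 0) * Real.log (h (y 0) / ∑ i : Fin (K+1), h (y i)))
    rw [Fin.prod_univ_succ, Fin.sum_univ_succ]
    have hμν : μ (y 0) = ν (y 0) * r (y 0) := by
      rw [hr, mul_comm]
      exact (div_mul_cancel₀ (μ (y 0)) (hν (y 0)).ne').symm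
    rw [hμν]; ring
  simp only [hEstarExp]
  rw [conv (fun x => g x), conv r]
  -- abbreviations
  have hSgpos : ∀ y : Fin (K+1) → X, 0 < ∑ i, g (y i) :=
    fun y => Finset.sum_pos (fun i _ => hgpos _) Finset.univ_nonempty
  have hSrpos : ∀ y : Fin (K+1) → X, 0 < ∑ i, r (y i) :=
    fun y => Finset.sum_pos (fun i _ => hrpos _) Finset.univ_nonempty
  have hWpos : ∀ y : Fin (K+1) → X, 0 < ∏ i, ν (y i) :=
    fun y => Finset.prod_pos (fun i _ => hν _)
  set D : ℝ := ∑ y : Fin (K+1) → X, (∏ i, ν (y i)) *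
      (r (y 0) * Real.log ((g (y 0) * ∑ i, r (y i)) / (r (y 0) * ∑ i, g (y i)))) with hD
  -- symmetrization
  have hsym : ∀ i : Fin (K+1), D = ∑ y : Fin (K+1) → X, (∏ j, ν (y j)) *
      (r (y i) * Real.log ((g (y i) * ∑ j, r (y j)) / (r (y i) * ∑ j, g (y j)))) := by
    intro i
    rw [hD]
    rw [← Equiv.sum_comp (Equiv.arrowCongr (Equiv.swap (0 : Fin (K+1)) i) (Equiv.refl X))
      (fun y : Fin (K+1) → X => (∏ j, ν (y j)) *
        (r (y i) * Real.log ((g (y i) * ∑ j, r (y j)) / (r (y i) * ∑ j, g (y j)))))]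
    apply Finset.sum_congr rfl
    intro y _
    have happ : ∀ j, (Equiv.arrowCongr (Equiv.swap (0 : Fin (K+1)) i) (Equiv.refl X)) y j
        = y (Equiv.swap (0 : Fin (K+1)) i j) := by
      intro j
      simp [Equiv.arrowCongr, Equiv.symm_swap]
    have hi : (Equiv.arrowCongr (Equiv.swap (0 : Fin (K+1)) i) (Equiv.refl X)) y i = y 0 := by
      rw [happ, Equiv.swap_apply_right]
    have hprod : (∏ j, ν ((Equiv.arrowCongr (Equiv.swap (0 : Fin (K+1)) i) (Equiv.refl X)) y j))
        = ∏ j, ν (y j) := by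
      simp only [happ]
      exact Equiv.prod_comp (Equiv.swap (0 : Fin (K+1)) i) (fun j => ν (y j))
    have hsumr : (∑ j, r ((Equiv.arrowCongr (Equiv.swap (0 : Fin (K+1)) i) (Equiv.refl X)) y j))
        = ∑ j, r (y j) := by
      simp only [happ]
      exact Equiv.sum_comp (Equiv.swap (0 : Fin (K+1)) i) (fun j => r (y j))
    have hsumg : (∑ j, g ((Equiv.arrowCongr (Equiv.swap (0 : Fin (K+1)) i) (Equiv.refl X)) y j))
        = ∑ j, g (y j) := by
      simp only [happ]
      exact Equiv.sum_comp (Equiv.swap (0 : Fin (K+1)) i) (fun j => g (y j))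
    rw [hprod, hsumr, hsumg, hi]
  have hDle : (↑K + 1 : ℝ) * D ≤ 0 := by
    have h1 : (↑K + 1 : ℝ) * D = ∑ i : Fin (K+1), D := by
      rw [Finset.sum_const, Finset.card_univ, Fintype.card_fin, nsmul_eq_mul]
      push_cast; ring
    rw [h1]
    have h2 : ∑ i : Fin (K+1), D = ∑ y : Fin (K+1) → X, (∏ j, ν (y j)) *
        ∑ i : Fin (K+1), r (y i) *
          Real.log ((g (y i) * ∑ j, r (y j)) / (r (y i) * ∑ j, g (y j))) := by
      calc ∑ i : Fin (K+1), D
          = ∑ i : Fin (K+1), ∑ y : Fin (K+1) → X, (∏ j, ν (y j)) *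
            (r (y i) * Real.log ((g (y i) * ∑ j, r (y j)) / (r (y i) * ∑ j, g (y j)))) :=
            Finset.sum_congr rfl (fun i _ => hsym i)
        _ = ∑ y : Fin (K+1) → X, ∑ i : Fin (K+1), (∏ j, ν (y j)) *
            (r (y i) * Real.log ((g (y i) * ∑ j, r (y j)) / (r (y i) * ∑ j, g (y j)))) :=
            Finset.sum_comm
        _ = _ := by
            apply Finset.sum_congr rfl
            intro y _
            rw [Finset.mul_sum]
    rw [h2]
    apply Finset.sum_nonpos
    intro y _
    apply mul_nonpos_of_nonneg_of_nonpos (hWpos y).le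
    exact gibbs_aux (fun i => r (y i)) (fun i => g (y i)) (fun i => hrpos _) (fun i => hgpos _)
  have hDsplit : (∑ y : Fin (K+1) → X, (∏ i, ν (y i)) *
        (r (y 0) * Real.log (g (y 0) / ∑ i, g (y i))))
      - (∑ y : Fin (K+1) → X, (∏ i, ν (y i)) *
        (r (y 0) * Real.log (r (y 0) / ∑ i, r (y i)))) = D := by
    rw [hD, ← Finset.sum_sub_distrib]
    apply Finset.sum_congr rfl
    intro y _
    have hlog : Real.log (g (y 0) / ∑ i, g (y i)) - Real.log (r (y 0) / ∑ i, r (y i))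
        = Real.log ((g (y 0) * ∑ i, r (y i)) / (r (y 0) * ∑ i, g (y i))) :=
      log_div_sub_log_div (hrpos _) (hgpos _) (hSrpos y) (hSgpos y)
    calc (∏ i, ν (y i)) * (r (y 0) * Real.log (g (y 0) / ∑ i, g (y i)))
        - (∏ i, ν (y i)) * (r (y 0) * Real.log (r (y 0) / ∑ i, r (y i)))
        = (∏ i, ν (y i)) * (r (y 0) *
          (Real.log (g (y 0) / ∑ i, g (y i)) - Real.log (r (y 0) / ∑ i, r (y i)))) := by ring
      _ = _ := by rw [hlog]
  have hK1 : (0:ℝ) < ↑K + 1 := by positivity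
  nlinarith [hDle, hDsplit, hK1]
end
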